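/- Exponential lower bound on the maximal height of extreme CAR mechanisms: for every odd n > 0 there exists an extreme CAR mechanism π on a set E with |E| = n such that the smallest positive integer k with k·π(A) an integer for every nonempty A ⊆ E equals the Fibonacci number F_n. -/

import Mathlib

/-- A CAR (Coarsening At Random) mechanism on a finite nonempty set `E`:
a function `π` from subsets of `E` to the reals, vanishing on `∅` (so that it is
effectively a function on the nonempty subsets), nonnegative, and such that
for every `x ∈ E` the sum of `π A` over all subsets `A` containing `x` equals `1`. -/
def IsCAR {E : Type*} [Fintype E] [DecidableEq E] (π : Finset E → ℝ) : Prop :=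
  π ∅ = 0 ∧ (∀ A : Finset E, 0 ≤ π A) ∧
    ∀ x : E, ∑ A ∈ Finset.univ.filter (fun A : Finset E => x ∈ A), π A = 1

/-- The support of a coarsening mechanism: the collection of subsets with positive mass. -/
def carSupport {E : Type*} (π : Finset E → ℝ) : Set (Finset E) := {A | 0 < π A}

/-- An extreme CAR mechanism: a CAR mechanism that is the unique CAR mechanism
with its support. -/
def IsExtremeCAR {E : Type*} [Fintype E] [DecidableEq E] (π : Finset E → ℝ) : Prop :=
  IsCAR π ∧
    ∀ π' : Finset E → ℝ, IsCAR π' → carSupport π' = carSupport π → π' = π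

open Finset Nat

namespace CarFib

def qmem (k x : ℕ) : Prop := x + 1 = 2*k ∨ (x % 2 = 0 ∧ 2*k ≤ x)
def pmem (k x : ℕ) : Prop := x < 2*k ∨ (x % 2 = 0 ∧ 2*k + 2 ≤ x)

instance (k x : ℕ) : Decidable (qmem k x) := by unfold qmem; infer_instance
instance (k x : ℕ) : Decidable (pmem k x) := by unfold pmem; infer_instance

def qset (m k : ℕ) : Finset (Fin (2*m+1)) := univ.filter fun x => qmem k x.val
def pset (m k : ℕ) : Finset (Fin (2*m+1)) := univ.filter fun x => pmem k x.val

noncomputable def qv (m k : ℕ) : ℝ := ((fib (2*k+1) : ℝ) - (fib (2*k) : ℝ)) / (fib (2*m+1) : ℝ)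
noncomputable def pv (m k : ℕ) : ℝ := (fib (2*k) : ℝ) / (fib (2*m+1) : ℝ)

noncomputable def gsum (m : ℕ) (u v : ℕ → ℝ) (B : Finset (Fin (2*m+1))) : ℝ :=
  (∑ k ∈ Finset.range (m+1), if B = qset m k then u k else 0)
  + ∑ k ∈ Finset.range m, if B = pset m (k+1) then v (k+1) else 0

noncomputable def carpi (m : ℕ) : Finset (Fin (2*m+1)) → ℝ := gsum m (qv m) (pv m)

variable {m : ℕ}

lemma mem_qset_iff (x : Fin (2*m+1)) (k : ℕ) :
    x ∈ qset m k ↔ (x.val + 1 = 2*k ∨ (x.val % 2 = 0 ∧ 2*k ≤ x.val)) := by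
  unfold qset; rw [Finset.mem_filter]; simp [qmem]

lemma mem_pset_iff (x : Fin (2*m+1)) (k : ℕ) :
    x ∈ pset m k ↔ (x.val < 2*k ∨ (x.val % 2 = 0 ∧ 2*k + 2 ≤ x.val)) := by
  unfold pset; rw [Finset.mem_filter]; simp [pmem]

-- fib facts
lemma fib_lt (k : ℕ) : fib (2*k) < fib (2*k+1) := by
  cases k with
  | zero => simp
  | succ j =>
      have h1 : 0 < fib (2*j+1) := Nat.fib_pos.2 (by omega)
      have h2 : fib (2*j+1+2) = fib (2*j+1) + fib (2*j+2) := Nat.fib_add_two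
      have e1 : 2*(j+1) = 2*j+2 := by ring
      rw [e1]
      have e2 : 2*j+2+1 = 2*j+1+2 := by ring
      rw [e2, h2]
      omega
lemma fibn_pos : (0:ℝ) < (fib (2*m+1) : ℝ) := by
  exact_mod_cast Nat.fib_pos.2 (by omega)

-- injectivity / distinctness
lemma qset_inj {k k' : ℕ} (hk : k ≤ m) (hk' : k' ≤ m) (h : qset m k = qset m k') : k = k' := by
  by_contra hne
  rcases Nat.lt_or_ge 0 k with hk0 | hk0
  · -- k ≥ 1 : use element 2*k-1 = 2*(k-1)+1
    have hlt : 2*(k-1)+1 < 2*m+1 := by omega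
    have hxk : (⟨2*(k-1)+1, hlt⟩ : Fin (2*m+1)) ∈ qset m k := by
      rw [mem_qset_iff, Fin.val_mk]; left; omega
    rw [h, mem_qset_iff] at hxk
    rw [Fin.val_mk] at hxk
    omega
  · -- k = 0, so k' ≥ 1
    have hk'0 : 0 < k' := by omega
    have hlt : 2*(k'-1)+1 < 2*m+1 := by omega
    have hxk : (⟨2*(k'-1)+1, hlt⟩ : Fin (2*m+1)) ∈ qset m k' := by
      rw [mem_qset_iff, Fin.val_mk]; left; omega
    rw [← h, mem_qset_iff] at hxk
    rw [Fin.val_mk] at hxk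
    omega
lemma pset_inj {k k' : ℕ} (hk1 : 1 ≤ k) (hk : k ≤ m) (hk1' : 1 ≤ k') (hk' : k' ≤ m)
    (h : pset m k = pset m k') : k = k' := by
  by_contra hne
  have hlt : 2*k < 2*m+1 := by omega
  have h1 : (⟨2*k, hlt⟩ : Fin (2*m+1)) ∉ pset m k := by
    rw [mem_pset_iff]; simp only; omega
  have h2 : (⟨2*k, hlt⟩ : Fin (2*m+1)) ∈ pset m k' := by
    rw [mem_pset_iff]; simp only; omega
  rw [h] at h1; exact h1 h2
lemma qset_ne_pset {k l : ℕ} (hk : k ≤ m) (hl1 : 1 ≤ l) (hl : l ≤ m) :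
    qset m k ≠ pset m l := by
  intro h
  rcases Nat.eq_zero_or_pos k with hk0 | hk0
  · -- use element 1
    have hlt : 1 < 2*m+1 := by omega
    have h1 : (⟨1, hlt⟩ : Fin (2*m+1)) ∈ pset m l := by
      rw [mem_pset_iff]; simp only; omega
    rw [← h, mem_qset_iff] at h1
    simp only at h1
    omega
  · -- use element 0
    have hlt : 0 < 2*m+1 := by omega
    have h1 : (⟨0, hlt⟩ : Fin (2*m+1)) ∈ pset m l := by
      rw [mem_pset_iff]; simp only; omega
    rw [← h, mem_qset_iff] at h1
    simp only at h1
    omega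

-- gsum evaluation lemmas
lemma gsum_qset (u v : ℕ → ℝ) {k : ℕ} (hk : k ≤ m) : gsum m u v (qset m k) = u k := by
  unfold gsum
  rw [Finset.sum_eq_single k]
  · rw [if_pos rfl]
    have h2 : ∑ l ∈ Finset.range m, (if qset m k = pset m (l+1) then v (l+1) else 0) = 0 := by
      apply Finset.sum_eq_zero
      intro l hl
      rw [if_neg (qset_ne_pset hk (by omega) (by simp at hl; omega))]
    rw [h2, add_zero]
  · intro b hb hbk
    rw [if_neg]
    intro hEq
    exact hbk (qset_inj hk (by simp at hb; omega) hEq).symm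
  · intro hk'
    exact absurd (Finset.mem_range.2 (by omega)) hk'

lemma gsum_pset (u v : ℕ → ℝ) {k : ℕ} (hk1 : 1 ≤ k) (hk : k ≤ m) :
    gsum m u v (pset m k) = v k := by
  unfold gsum
  have h1 : ∑ l ∈ Finset.range (m+1), (if pset m k = qset m l then u l else 0) = 0 := by
    apply Finset.sum_eq_zero
    intro l hl
    rw [if_neg]
    intro hEq
    exact (qset_ne_pset (by simp at hl; omega) hk1 hk) hEq.symm
  rw [h1, zero_add]
  obtain ⟨j, rfl⟩ : ∃ j, k = j + 1 := ⟨k - 1, by omega⟩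
  rw [Finset.sum_eq_single j]
  · rw [if_pos rfl]
  · intro b hb hbj
    rw [if_neg]
    intro hEq
    exact hbj (by have := pset_inj (by omega) (by simp at hb; omega) hk1 hk hEq.symm; omega)
  · intro hj
    exact absurd (Finset.mem_range.2 (by omega)) hj

lemma gsum_other (u v : ℕ → ℝ) {B : Finset (Fin (2*m+1))}
    (hq : ∀ k, k ≤ m → B ≠ qset m k) (hp : ∀ k, 1 ≤ k → k ≤ m → B ≠ pset m k) :
    gsum m u v B = 0 := by
  unfold gsum
  rw [Finset.sum_eq_zero, Finset.sum_eq_zero, add_zero]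
  · intro l hl
    rw [if_neg (hp (l+1) (by omega) (by simp at hl; omega))]
  · intro l hl
    rw [if_neg (hq l (by simp at hl; omega))]

-- value lemmas
lemma carpi_qset {k : ℕ} (hk : k ≤ m) : carpi m (qset m k) = qv m k := gsum_qset _ _ hk
lemma carpi_pset {k : ℕ} (hk1 : 1 ≤ k) (hk : k ≤ m) : carpi m (pset m k) = pv m k :=
  gsum_pset _ _ hk1 hk
lemma carpi_other {B : Finset (Fin (2*m+1))}
    (hq : ∀ k, k ≤ m → B ≠ qset m k) (hp : ∀ k, 1 ≤ k → k ≤ m → B ≠ pset m k) :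
    carpi m B = 0 := gsum_other _ _ hq hp

-- master sum reduction
lemma key_sum (f : Finset (Fin (2*m+1)) → ℝ)
    (hf : ∀ B, (∀ k, k ≤ m → B ≠ qset m k) → (∀ k, 1 ≤ k → k ≤ m → B ≠ pset m k) → f B = 0)
    (x : Fin (2*m+1)) :
    ∑ B ∈ Finset.univ.filter (fun B : Finset (Fin (2*m+1)) => x ∈ B), f B
      = (∑ k ∈ Finset.range (m+1), if x ∈ qset m k then f (qset m k) else 0)
        + ∑ k ∈ Finset.range m, if x ∈ pset m (k+1) then f (pset m (k+1)) else 0 := by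
  have hfb : ∀ B : Finset (Fin (2*m+1)),
      f B = gsum m (fun k => f (qset m k)) (fun k => f (pset m k)) B := by
    intro B
    by_cases hq : ∃ k, k ≤ m ∧ B = qset m k
    · obtain ⟨k, hk, rfl⟩ := hq
      rw [gsum_qset _ _ hk]
    · by_cases hp : ∃ k, 1 ≤ k ∧ k ≤ m ∧ B = pset m k
      · obtain ⟨k, hk1, hk, rfl⟩ := hp
        rw [gsum_pset _ _ hk1 hk]
      · rw [gsum_other, hf]
        · intro k hk hB; exact hq ⟨k, hk, hB⟩
        · intro k hk1 hk hB; exact hp ⟨k, hk1, hk, hB⟩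
        · intro k hk hB; exact hq ⟨k, hk, hB⟩
        · intro k hk1 hk hB; exact hp ⟨k, hk1, hk, hB⟩
  rw [Finset.sum_congr rfl (fun B _ => hfb B)]
  unfold gsum
  rw [Finset.sum_add_distrib, Finset.sum_comm, Finset.sum_comm (s := Finset.univ.filter _)]
  congr 1
  · apply Finset.sum_congr rfl
    intro k _
    rw [Finset.sum_ite_eq' (Finset.univ.filter fun B : Finset (Fin (2*m+1)) => x ∈ B) (qset m k)]
    simp
  · apply Finset.sum_congr rfl
    intro k _
    rw [Finset.sum_ite_eq' (Finset.univ.filter fun B : Finset (Fin (2*m+1)) => x ∈ B) (pset m (k+1))]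
    simp

-- parity reductions
lemma sum_even (f : Finset (Fin (2*m+1)) → ℝ)
    (hf : ∀ B, (∀ k, k ≤ m → B ≠ qset m k) → (∀ k, 1 ≤ k → k ≤ m → B ≠ pset m k) → f B = 0)
    {x : Fin (2*m+1)} {i : ℕ} (hx : x.val = 2*i) :
    ∑ B ∈ Finset.univ.filter (fun B : Finset (Fin (2*m+1)) => x ∈ B), f B
      = (∑ k ∈ Finset.range (i+1), f (qset m k))
        + ∑ k ∈ Finset.range m, (if k + 1 = i then 0 else f (pset m (k+1))) := by
  have hi : i ≤ m := by have := x.isLt; omega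
  rw [key_sum f hf x]
  congr 1
  · -- q part
    have h1 : ∀ k ∈ Finset.range (m+1), (if x ∈ qset m k then f (qset m k) else 0)
        = (if k ≤ i then f (qset m k) else 0) := by
      intro k _
      have hiff : (x ∈ qset m k) ↔ k ≤ i := by rw [mem_qset_iff, hx]; omega
      rw [if_congr hiff rfl rfl]
    rw [Finset.sum_congr rfl h1, ← Finset.sum_filter]
    apply Finset.sum_congr _ (fun _ _ => rfl)
    ext k
    simp only [Finset.mem_filter, Finset.mem_range]
    omega
  · -- p part
    apply Finset.sum_congr rfl
    intro k _
    have hiff : (x ∈ pset m (k+1)) ↔ ¬(k + 1 = i) := by rw [mem_pset_iff, hx]; omega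
    rw [if_congr hiff rfl rfl, ite_not]

lemma sum_odd (f : Finset (Fin (2*m+1)) → ℝ)
    (hf : ∀ B, (∀ k, k ≤ m → B ≠ qset m k) → (∀ k, 1 ≤ k → k ≤ m → B ≠ pset m k) → f B = 0)
    {x : Fin (2*m+1)} {i : ℕ} (hx : x.val = 2*i+1) :
    ∑ B ∈ Finset.univ.filter (fun B : Finset (Fin (2*m+1)) => x ∈ B), f B
      = f (qset m (i+1)) + ∑ k ∈ Finset.Ico i m, f (pset m (k+1)) := by
  have hi : i < m := by have := x.isLt; omega
  rw [key_sum f hf x]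
  congr 1
  · have h1 : ∀ k ∈ Finset.range (m+1), (if x ∈ qset m k then f (qset m k) else 0)
        = (if k = i+1 then f (qset m k) else 0) := by
      intro k _
      have hiff : (x ∈ qset m k) ↔ k = i + 1 := by rw [mem_qset_iff, hx]; omega
      rw [if_congr hiff rfl rfl]
    rw [Finset.sum_congr rfl h1,
      Finset.sum_ite_eq' (Finset.range (m+1)) (i+1) (fun k => f (qset m k))]
    rw [if_pos (Finset.mem_range.2 (by omega))]
  · have h1 : ∀ k ∈ Finset.range m, (if x ∈ pset m (k+1) then f (pset m (k+1)) else 0)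
        = (if i ≤ k then f (pset m (k+1)) else 0) := by
      intro k _
      have hiff : (x ∈ pset m (k+1)) ↔ i ≤ k := by rw [mem_pset_iff, hx]; omega
      rw [if_congr hiff rfl rfl]
    rw [Finset.sum_congr rfl h1, ← Finset.sum_filter]
    apply Finset.sum_congr _ (fun _ _ => rfl)
    ext k
    simp only [Finset.mem_filter, Finset.mem_range, Finset.mem_Ico]
    omega

-- fibonacci sums
lemma sum_fib_odd (i : ℕ) : ∑ k ∈ Finset.range i, (fib (2*k+1) : ℝ) = fib (2*i) := by
  induction i with
  | zero => simp
  | succ j ih =>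
      rw [Finset.sum_range_succ, ih]
      have e2 : 2*(j+1) = 2*j+2 := by ring
      rw [e2, Nat.fib_add_two]
      push_cast
      ring
lemma sum_fib_even (j : ℕ) : ∑ k ∈ Finset.range j, (fib (2*k+2) : ℝ) = fib (2*j+1) - 1 := by
  induction j with
  | zero => simp
  | succ i ih =>
      rw [Finset.sum_range_succ, ih]
      have key : (fib (2*(i+1)+1) : ℕ) = fib (2*i+1) + fib (2*i+2) := by
        have e2 : 2*(i+1)+1 = (2*i+1)+2 := by ring
        rw [e2, Nat.fib_add_two]
      rw [key]
      push_cast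
      ring

lemma qset_nonempty {k : ℕ} (hk : k ≤ m) : (qset m k).Nonempty := by
  rcases Nat.eq_zero_or_pos k with h0 | h0
  · exact ⟨⟨0, by omega⟩, by rw [mem_qset_iff, Fin.val_mk]; omega⟩
  · exact ⟨⟨2*(k-1)+1, by omega⟩, by rw [mem_qset_iff, Fin.val_mk]; omega⟩

lemma pset_nonempty {k : ℕ} (hk1 : 1 ≤ k) : (pset m k).Nonempty :=
  ⟨⟨0, by omega⟩, by rw [mem_pset_iff, Fin.val_mk]; omega⟩

lemma sum_qv_range (i : ℕ) :
    ∑ k ∈ Finset.range (i+1), qv m k = (1 + (fib (2*i) : ℝ)) / (fib (2*m+1) : ℝ) := by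
  unfold qv
  rw [← Finset.sum_div]
  congr 1
  rw [Finset.sum_sub_distrib]
  have h1 : ∑ k ∈ Finset.range (i+1), (fib (2*k+1) : ℝ) = fib (2*(i+1)) := sum_fib_odd (i+1)
  have h2 : ∑ k ∈ Finset.range (i+1), (fib (2*k) : ℝ)
      = ∑ k ∈ Finset.range i, (fib (2*(k+1)) : ℝ) + fib (2*0) := Finset.sum_range_succ' _ i
  have h3 : ∑ k ∈ Finset.range i, (fib (2*(k+1)) : ℝ) = fib (2*i+1) - 1 := by
    rw [← sum_fib_even i]
    apply Finset.sum_congr rfl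
    intro k _
    have e : 2*(k+1) = 2*k+2 := by ring
    rw [e]
  rw [h1, h2, h3]
  have h4 : (fib (2*(i+1)) : ℝ) = fib (2*i) + fib (2*i+1) := by
    have e : 2*(i+1) = 2*i+2 := by ring
    rw [e, Nat.fib_add_two]
    push_cast; ring
  rw [h4]
  push_cast
  ring

lemma sum_pv_range (j : ℕ) :
    ∑ k ∈ Finset.range j, pv m (k+1) = ((fib (2*j+1) : ℝ) - 1) / (fib (2*m+1) : ℝ) := by
  unfold pv
  rw [← Finset.sum_div]
  congr 1
  rw [← sum_fib_even j]
  apply Finset.sum_congr rfl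
  intro k _
  have e : 2*(k+1) = 2*k+2 := by ring
  rw [e]

lemma sum_if_eq_zero (g : ℕ → ℝ) {j mm : ℕ} (hj : j < mm) :
    ∑ k ∈ Finset.range mm, (if k = j then 0 else g k)
      = (∑ k ∈ Finset.range mm, g k) - g j := by
  have hmem : j ∈ Finset.range mm := Finset.mem_range.2 hj
  rw [← Finset.sum_erase_add (Finset.range mm) g hmem,
    ← Finset.sum_erase_add (Finset.range mm) (fun k => if k = j then 0 else g k) hmem]
  rw [if_pos rfl, add_zero]
  rw [Finset.sum_congr rfl (fun k hk => if_neg (Finset.ne_of_mem_erase hk))]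
  ring

lemma qv_nonneg (k : ℕ) : 0 ≤ qv m k := by
  unfold qv
  apply div_nonneg _ (le_of_lt fibn_pos)
  have := fib_lt k
  have : (fib (2*k) : ℝ) ≤ (fib (2*k+1) : ℝ) := by exact_mod_cast le_of_lt this
  linarith

lemma pv_nonneg (k : ℕ) : 0 ≤ pv m k :=
  div_nonneg (Nat.cast_nonneg _) (le_of_lt fibn_pos)

lemma carpi_vanish : ∀ B : Finset (Fin (2*m+1)),
    (∀ k, k ≤ m → B ≠ qset m k) → (∀ k, 1 ≤ k → k ≤ m → B ≠ pset m k) → carpi m B = 0 :=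
  fun _ hq hp => carpi_other hq hp

lemma carpi_isCAR : IsCAR (carpi m) := by
  refine ⟨?_, ?_, ?_⟩
  · apply carpi_other
    · intro k hk hEq
      obtain ⟨y, hy⟩ := qset_nonempty hk
      rw [← hEq] at hy
      simp at hy
    · intro k hk1 _ hEq
      obtain ⟨y, hy⟩ := pset_nonempty hk1
      rw [← hEq] at hy
      simp at hy
  · intro B
    unfold carpi gsum
    refine add_nonneg (Finset.sum_nonneg fun k _ => ?_) (Finset.sum_nonneg fun k _ => ?_)
    · split_ifs
      · exact qv_nonneg k
      · exact le_refl 0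
    · split_ifs
      · exact pv_nonneg (k+1)
      · exact le_refl 0
  · intro x
    have hF : (fib (2*m+1) : ℝ) ≠ 0 := ne_of_gt fibn_pos
    rcases Nat.even_or_odd x.val with he | ho
    · obtain ⟨i, hi⟩ := he
      have hx : x.val = 2*i := by omega
      have him : i ≤ m := by have := x.isLt; omega
      rw [sum_even (carpi m) carpi_vanish hx]
      have hq : ∑ k ∈ Finset.range (i+1), carpi m (qset m k) = ∑ k ∈ Finset.range (i+1), qv m k := by
        apply Finset.sum_congr rfl
        intro k hk
        exact carpi_qset (by simp at hk; omega)
      have hp : ∀ k ∈ Finset.range m, (if k + 1 = i then 0 else carpi m (pset m (k+1)))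
          = (if k + 1 = i then 0 else pv m (k+1)) := by
        intro k hk
        split_ifs
        · rfl
        · exact carpi_pset (by omega) (by simp at hk; omega)
      rw [hq, Finset.sum_congr rfl hp, sum_qv_range i]
      rcases Nat.eq_zero_or_pos i with h0 | h0
      · subst h0
        have : ∀ k ∈ Finset.range m, (if k + 1 = 0 then (0:ℝ) else pv m (k+1)) = pv m (k+1) := by
          intro k _
          rw [if_neg (by omega)]
        rw [Finset.sum_congr rfl this, sum_pv_range m]
        simp
        field_simp
        ring
      · obtain ⟨j, rfl⟩ : ∃ j, i = j + 1 := ⟨i - 1, by omega⟩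
        have hconv : ∀ k ∈ Finset.range m, (if k + 1 = j + 1 then (0:ℝ) else pv m (k+1))
            = (if k = j then 0 else pv m (k+1)) := by
          intro k _
          exact if_congr (by omega) rfl rfl
        rw [Finset.sum_congr rfl hconv, sum_if_eq_zero (fun k => pv m (k+1)) (by omega), sum_pv_range m]
        unfold pv
        field_simp
        ring
    · obtain ⟨i, hi⟩ := ho
      have hx : x.val = 2*i+1 := by omega
      have him : i < m := by have := x.isLt; omega
      rw [sum_odd (carpi m) carpi_vanish hx]
      rw [carpi_qset (by omega)]
      have hp : ∑ k ∈ Finset.Ico i m, carpi m (pset m (k+1)) = ∑ k ∈ Finset.Ico i m, pv m (k+1) := by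
        apply Finset.sum_congr rfl
        intro k hk
        exact carpi_pset (by omega) (by simp at hk; omega)
      rw [hp, Finset.sum_Ico_eq_sub _ (le_of_lt him), sum_pv_range m, sum_pv_range i]
      unfold qv
      have h1 : (fib (2*(i+1)+1) : ℝ) = fib (2*i+1) + fib (2*i+2) := by
        have e : 2*(i+1)+1 = (2*i+1)+2 := by ring
        rw [e, Nat.fib_add_two]
        push_cast; ring
      have h2 : (2:ℕ)*(i+1) = 2*i+2 := by ring
      rw [h1, h2]
      field_simp
      ring

lemma qv_pos (k : ℕ) : 0 < qv m k := by
  unfold qv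
  apply div_pos _ fibn_pos
  have := fib_lt k
  have h : (fib (2*k) : ℝ) < (fib (2*k+1) : ℝ) := by exact_mod_cast this
  linarith

lemma pv_pos {k : ℕ} (hk : 1 ≤ k) : 0 < pv m k := by
  unfold pv
  apply div_pos _ fibn_pos
  exact_mod_cast Nat.fib_pos.2 (by omega)

lemma carpi_support (B : Finset (Fin (2*m+1))) :
    B ∈ carSupport (carpi m) ↔
      (∃ k, k ≤ m ∧ B = qset m k) ∨ (∃ k, 1 ≤ k ∧ k ≤ m ∧ B = pset m k) := by
  constructor
  · intro hB
    by_contra hcon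
    push_neg at hcon
    obtain ⟨h1, h2⟩ := hcon
    have h0 : carpi m B = 0 := carpi_other (fun k hk => h1 k hk) (fun k hk1 hk => h2 k hk1 hk)
    have : (0:ℝ) < carpi m B := hB
    rw [h0] at this
    exact lt_irrefl _ this
  · intro hB
    rcases hB with ⟨k, hk, rfl⟩ | ⟨k, hk1, hk, rfl⟩
    · show (0:ℝ) < carpi m (qset m k)
      rw [carpi_qset hk]
      exact qv_pos k
    · show (0:ℝ) < carpi m (pset m k)
      rw [carpi_pset hk1 hk]
      exact pv_pos hk1

lemma carpi_unique (π' : Finset (Fin (2*m+1)) → ℝ) (h' : IsCAR π')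
    (hs : carSupport π' = carSupport (carpi m)) : π' = carpi m := by
  obtain ⟨hz', hnn', hsum'⟩ := h'
  have hF : (fib (2*m+1) : ℝ) ≠ 0 := ne_of_gt fibn_pos
  have hvan : ∀ B : Finset (Fin (2*m+1)),
      (∀ k, k ≤ m → B ≠ qset m k) → (∀ k, 1 ≤ k → k ≤ m → B ≠ pset m k) → π' B = 0 := by
    intro B hq hp
    by_contra h0
    have hpos : B ∈ carSupport π' := lt_of_le_of_ne (hnn' B) (Ne.symm h0)
    rw [hs, carpi_support] at hpos
    rcases hpos with ⟨k, hk, hB⟩ | ⟨k, hk1, hk, hB⟩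
    · exact hq k hk hB
    · exact hp k hk1 hk hB
  set a : ℕ → ℝ := fun k => π' (qset m k) with ha_def
  set b : ℕ → ℝ := fun k => π' (pset m k) with hb_def
  have Ee : ∀ i, i ≤ m →
      (∑ k ∈ Finset.range (i+1), a k)
        + ∑ k ∈ Finset.range m, (if k + 1 = i then 0 else b (k+1)) = 1 := by
    intro i hi
    have hx : ((⟨2*i, by omega⟩ : Fin (2*m+1))).val = 2*i := Fin.val_mk _
    rw [← sum_even π' hvan hx]
    exact hsum' _
  have Eo : ∀ i, i < m → a (i+1) + ∑ k ∈ Finset.Ico i m, b (k+1) = 1 := by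
    intro i hi
    have hx : ((⟨2*i+1, by omega⟩ : Fin (2*m+1))).val = 2*i+1 := Fin.val_mk _
    rw [← sum_odd π' hvan hx]
    exact hsum' _
  have hEe0 : a 0 + ∑ k ∈ Finset.range m, b (k+1) = 1 := by
    have h := Ee 0 (by omega)
    rw [Finset.sum_range_one] at h
    rw [Finset.sum_congr rfl (fun k _ => if_neg (by omega : ¬ (k+1 = 0)))] at h
    exact h
  -- values of a, b forced
  have hvals : (∀ k, k ≤ m → a k = qv m k) ∧ (∀ k, 1 ≤ k → k ≤ m → b k = pv m k) := by
    rcases Nat.eq_zero_or_pos m with hm0 | hm1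
    · subst hm0
      constructor
      · intro k hk
        interval_cases k
        have : a 0 = 1 := by simpa using hEe0
        rw [this]
        unfold qv
        norm_num
      · intro k hk1 hk
        omega
    · -- m ≥ 1
      have hEo0 : a 1 + ∑ k ∈ Finset.range m, b (k+1) = 1 := by
        have h := Eo 0 hm1
        rwa [Nat.Ico_zero_eq_range] at h
      have ha10 : a 1 = a 0 := by linarith
      have hEe' : ∀ i, 1 ≤ i → i ≤ m →
          (∑ k ∈ Finset.range (i+1), a k)
            + ((∑ k ∈ Finset.range m, b (k+1)) - b i) = 1 := by
        intro i hi1 hi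
        have h := Ee i hi
        have hconv : ∀ k ∈ Finset.range m, (if k + 1 = i then (0:ℝ) else b (k+1))
            = (if k = i - 1 then 0 else b (k+1)) := fun k _ => if_congr (by omega) rfl rfl
        rw [Finset.sum_congr rfl hconv, sum_if_eq_zero (fun k => b (k+1)) (by omega : i-1 < m)] at h
        have : i - 1 + 1 = i := by omega
        rw [this] at h
        exact h
      have hb1 : b 1 = a 0 := by
        have h1 := hEe' 1 (by omega) hm1
        rw [Finset.sum_range_succ, Finset.sum_range_one] at h1
        linarith
      have recA : ∀ j, j + 2 ≤ m → a (j+2) = a (j+1) + b (j+1) := by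
        intro j hj
        have h1 := Eo j (by omega)
        have h2 := Eo (j+1) (by omega)
        rw [Finset.sum_eq_sum_Ico_succ_bot (by omega : j < m)] at h1
        linarith
      have recB : ∀ j, j + 2 ≤ m → b (j+2) = b (j+1) + a (j+2) := by
        intro j hj
        have h1 := hEe' (j+1) (by omega) (by omega)
        have h2 := hEe' (j+2) (by omega) (by omega)
        rw [Finset.sum_range_succ (n := j+2)] at h2
        linarith
      have main : ∀ j, j + 1 ≤ m →
          a (j+1) = fib (2*j+1) * a 0 ∧ b (j+1) = fib (2*j+2) * a 0 := by
        intro j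
        induction j with
        | zero =>
            intro _
            constructor
            · rw [ha10]; norm_num
            · rw [hb1]; norm_num
        | succ jj ih =>
            intro hjm
            obtain ⟨hA, hB⟩ := ih (by omega)
            have e1 : (fib (2*(jj+1)+1) : ℝ) = fib (2*jj+1) + fib (2*jj+2) := by
              have e : 2*(jj+1)+1 = (2*jj+1)+2 := by ring
              rw [e, Nat.fib_add_two]
              push_cast; ring
            have e2 : (fib (2*(jj+1)+2) : ℝ) = fib (2*jj+2) + fib (2*(jj+1)+1) := by
              have e : 2*(jj+1)+2 = (2*jj+2)+2 := by ring
              rw [e, Nat.fib_add_two]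
              have e' : 2*jj+2+1 = 2*(jj+1)+1 := by ring
              rw [e']
              push_cast; ring
            have hA2 : a (jj+2) = fib (2*(jj+1)+1) * a 0 := by
              rw [recA jj (by omega), hA, hB, e1]
              ring
            refine ⟨hA2, ?_⟩
            rw [recB jj (by omega), hB, hA2, e2]
            ring
      -- closing
      obtain ⟨j0, rfl⟩ : ∃ j0, m = j0 + 1 := ⟨m - 1, by omega⟩
      obtain ⟨hAm, hBm⟩ := main j0 (by omega)
      have hclose := Eo j0 (by omega)
      rw [Nat.Ico_succ_singleton, Finset.sum_singleton] at hclose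
      have hfib3 : (fib (2*(j0+1)+1) : ℝ) = fib (2*j0+1) + fib (2*j0+2) := by
        have e : 2*(j0+1)+1 = (2*j0+1)+2 := by ring
        rw [e, Nat.fib_add_two]
        push_cast; ring
      have ha0 : a 0 = 1 / (fib (2*(j0+1)+1) : ℝ) := by
        rw [hAm, hBm] at hclose
        rw [hfib3]
        have hpos : (0:ℝ) < (fib (2*j0+1) : ℝ) + (fib (2*j0+2) : ℝ) := by
          have : (0:ℝ) < (fib (2*j0+1) : ℝ) := by exact_mod_cast Nat.fib_pos.2 (by omega)
          have h2 : (0:ℝ) ≤ (fib (2*j0+2) : ℝ) := Nat.cast_nonneg _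
          linarith
        field_simp
        linarith
      constructor
      · intro k hk
        rcases Nat.eq_zero_or_pos k with hk0 | hk0
        · subst hk0
          rw [ha0]
          unfold qv
          norm_num
        · obtain ⟨j, rfl⟩ : ∃ j, k = j + 1 := ⟨k - 1, by omega⟩
          obtain ⟨hA, _⟩ := main j (by omega)
          rw [hA, ha0]
          unfold qv
          have e1 : (fib (2*(j+1)+1) : ℝ) = fib (2*j+1) + fib (2*(j+1)) := by
            have e : 2*(j+1)+1 = (2*j+1)+2 := by ring
            rw [e, Nat.fib_add_two]
            have e' : 2*j+1+1 = 2*(j+1) := by ring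
            rw [e']
            push_cast; ring
          rw [e1]
          field_simp
          ring
      · intro k hk1 hk
        obtain ⟨j, rfl⟩ : ∃ j, k = j + 1 := ⟨k - 1, by omega⟩
        obtain ⟨_, hB⟩ := main j (by omega)
        rw [hB, ha0]
        unfold pv
        have e : 2*(j+1) = 2*j+2 := by ring
        rw [e]
        field_simp
  -- conclude
  obtain ⟨hqvals, hpvals⟩ := hvals
  funext B
  by_cases hq : ∃ k, k ≤ m ∧ B = qset m k
  · obtain ⟨k, hk, rfl⟩ := hq
    rw [carpi_qset hk]
    exact hqvals k hk
  · by_cases hp : ∃ k, 1 ≤ k ∧ k ≤ m ∧ B = pset m k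
    · obtain ⟨k, hk1, hk, rfl⟩ := hp
      rw [carpi_pset hk1 hk]
      exact hpvals k hk1 hk
    · push_neg at hq hp
      rw [carpi_other (fun k hk => hq k hk) (fun k hk1 hk => hp k hk1 hk),
        hvan B (fun k hk => hq k hk) (fun k hk1 hk => hp k hk1 hk)]

end CarFib

/-- Exponential lower bound on the maximal height of extreme CAR mechanisms: for every
odd `n > 0` there is an extreme CAR mechanism `π` on a set of `n` elements such that
the smallest positive integer `k` with `k · π A ∈ ℤ` for all `A` is the Fibonacci
number `F_n` (`Nat.fib`, with `F_1 = F_2 = 1`). -/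
theorem extreme_car_height_fib (n : ℕ) (hn : Odd n) (hpos : 0 < n) :
    ∃ π : Finset (Fin n) → ℝ, IsExtremeCAR π ∧
      IsLeast {k : ℕ | 0 < k ∧ ∀ A : Finset (Fin n), ∃ z : ℤ, (k : ℝ) * π A = (z : ℝ)}
        (Nat.fib n) := by
  obtain ⟨m, rfl⟩ := hn
  have hFpos : (0:ℝ) < (Nat.fib (2*m+1) : ℝ) := CarFib.fibn_pos
  have hF : (Nat.fib (2*m+1) : ℝ) ≠ 0 := ne_of_gt hFpos
  refine ⟨CarFib.carpi m, ⟨CarFib.carpi_isCAR, fun π' h1 h2 => CarFib.carpi_unique π' h1 h2⟩, ?_, ?_⟩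
  · refine ⟨Nat.fib_pos.2 (by omega), fun A => ?_⟩
    by_cases hq : ∃ k, k ≤ m ∧ A = CarFib.qset m k
    · obtain ⟨k, hk, rfl⟩ := hq
      refine ⟨(Nat.fib (2*k+1) : ℤ) - Nat.fib (2*k), ?_⟩
      rw [CarFib.carpi_qset hk]
      unfold CarFib.qv
      push_cast
      field_simp
    · by_cases hp : ∃ k, 1 ≤ k ∧ k ≤ m ∧ A = CarFib.pset m k
      · obtain ⟨k, hk1, hk, rfl⟩ := hp
        refine ⟨(Nat.fib (2*k) : ℤ), ?_⟩
        rw [CarFib.carpi_pset hk1 hk]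
        unfold CarFib.pv
        push_cast
        field_simp
      · push_neg at hq hp
        refine ⟨0, ?_⟩
        rw [CarFib.carpi_other (fun k hk => hq k hk) (fun k hk1 hk => hp k hk1 hk)]
        simp
  · rintro k ⟨hk0, hall⟩
    obtain ⟨z, hz⟩ := hall (CarFib.qset m 0)
    rw [CarFib.carpi_qset (Nat.zero_le m)] at hz
    have hq0 : CarFib.qv m 0 = 1 / (Nat.fib (2*m+1) : ℝ) := by
      unfold CarFib.qv
      norm_num
    rw [hq0] at hz
    have hzF : (k:ℝ) = z * (Nat.fib (2*m+1) : ℝ) := by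
      field_simp at hz
      linarith
    have hz1 : (1:ℤ) ≤ z := by
      by_contra hcon
      push_neg at hcon
      have hz0 : (z:ℝ) ≤ 0 := by exact_mod_cast Int.lt_add_one_iff.mp (by omega : z < 0 + 1)
      have : (k:ℝ) ≤ 0 := by
        rw [hzF]
        exact mul_nonpos_of_nonpos_of_nonneg hz0 (le_of_lt hFpos)
      have hkpos : (0:ℝ) < (k:ℝ) := by exact_mod_cast hk0
      linarith
    have hz1' : (1:ℝ) ≤ (z:ℝ) := by exact_mod_cast hz1
    have : (Nat.fib (2*m+1) : ℝ) ≤ (k:ℝ) := by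
      rw [hzF]
      nlinarith
    exact_mod_cast this
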